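/- Let ℓ, n ∈ ℕ, let 0 < p ≤ (2ℓ)^{-ℓ}, let H⃗ be an oriented graph with V(H) ⊂ [n], let 2 ≤ r ≤ ℓ, and suppose (A, H, B, X) is an r-frame. Then there exists a family 𝒞 of digraphs on vertex set A ∪ V(H) such that: (i) for every graph G with V(G) = A ∪ V(H) and every orientation G⃗ ∈ D_{r−1}(G) ∩ S_r(G, H⃗, B, X), there exists C⃗ ∈ 𝒞 such that every directed edge of G⃗ with one endpoint in A and the other in V(H) is an edge of C⃗; (ii) for every C⃗ ∈ 𝒞, at most ℓα² pairs {u,v} of vertices satisfy that both (u,v) and (v,u) are edges of C⃗; and (iii) |𝒞| ≤ exp(4 α p^{−1/ℓ} log n). -/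

import Mathlib

open MeasureTheory Filter

/-- An orientation of a simple graph: each edge gets exactly one direction. -/
structure GraphOrientation {V : Type*} (G : SimpleGraph V) where
  dir : V → V → Prop
  dir_adj : ∀ ⦃u v⦄, dir u v → G.Adj u v
  total : ∀ ⦃u v⦄, G.Adj u v → dir u v ∨ dir v u
  asymm : ∀ ⦃u v⦄, dir u v → ¬ dir v u

namespace GraphOrientation

variable {V : Type*} {G : SimpleGraph V}

/-- There is a directed path of length `r` from `u` to `v` in `D` avoiding the set `X`
(this is the edge relation of the digraph `(D \ X)^r`). -/
def PathEdge (D : GraphOrientation G) (X : Set V) (r : ℕ) (u v : V) : Prop :=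
  ∃ c : Fin (r + 1) → V, Function.Injective c ∧ (∀ i, c i ∉ X) ∧
    c 0 = u ∧ c (Fin.last r) = v ∧
    ∀ i : Fin r, D.dir (c i.castSucc) (c i.succ)

/-- `D` contains a directed cycle of length `k`. -/
def HasDirCycle (D : GraphOrientation G) (k : ℕ) : Prop :=
  ∃ c : Fin k → V, Function.Injective c ∧
    ∀ i : Fin k, D.dir (c i) (c ⟨((i : ℕ) + 1) % k, Nat.mod_lt _ i.pos⟩)

/-- The number `e↔_{(D\X)^r}(A,B)` of edges between `A` and `B` (in either direction)
in the digraph `(D \ X)^r`. -/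
noncomputable def eBoth (D : GraphOrientation G) (X : Set V) (r : ℕ) (A B : Set V) : ℕ :=
  {q : V × V | q.1 ∈ A ∧ q.2 ∈ B ∧ D.PathEdge X r q.1 q.2}.ncard +
  {q : V × V | q.1 ∈ A ∧ q.2 ∈ B ∧ D.PathEdge X r q.2 q.1}.ncard

/-- The degree `d↔_{(D\X)^r}(a,B) = d⁺(a,B) + d⁻(a,B)` in the digraph `(D \ X)^r`. -/
noncomputable def dBoth (D : GraphOrientation G) (X : Set V) (r : ℕ) (a : V) (B : Set V) : ℕ :=
  {b ∈ B | D.PathEdge X r a b}.ncard + {b ∈ B | D.PathEdge X r b a}.ncard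

/-- `D` is `r`-locally dense w.r.t. edge probability `p`, parameter `ℓ`, vertex set `W`
and size parameter `a` (playing the role of `α = 2⁶ log n / p`). -/
def LocallyDense (D : GraphOrientation G) (W : Set V) (p : ℝ) (ℓ r : ℕ) (a : ℝ) : Prop :=
  ∀ A' B X : Set V, A' ⊆ W → B ⊆ W → X ⊆ W →
    Disjoint A' B → Disjoint A' X → Disjoint B X →
    (A'.ncard : ℝ) = a → (r : ℝ) * a ≤ B.ncard → (B.ncard : ℝ) ≤ (ℓ : ℝ) * a →
    (X.ncard : ℝ) ≤ ((ℓ : ℝ) + 1 - r) * a →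
    (1 / 2) * p ^ (((ℓ : ℝ) - r + 1) / ℓ) * A'.ncard * B.ncard ≤ (D.eBoth X r A' B : ℝ)

/-- `D` extends the orientation `Hd` of a subgraph. -/
def Extends (D : GraphOrientation G) {H : SimpleGraph V} (Hd : GraphOrientation H) : Prop :=
  ∀ ⦃u v⦄, Hd.dir u v → D.dir u v

end GraphOrientation

/-- The quantity `α = 2⁶ (log n) / p`. -/
noncomputable def alphaP (n : ℕ) (p : ℝ) : ℝ := 2 ^ 6 * Real.log n / p

/-- A Bernoulli-type measure on `Bool` with success probability `p`. -/
noncomputable def bern (p : ℝ) : Measure Bool :=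
  ENNReal.ofReal p • Measure.dirac true + ENNReal.ofReal (1 - p) • Measure.dirac false

instance bern.instIsFiniteMeasure (p : ℝ) : IsFiniteMeasure (bern p) := by
  constructor
  rw [bern]
  simp only [Measure.add_apply, Measure.smul_apply, smul_eq_mul]
  refine ENNReal.add_lt_top.2 ⟨?_, ?_⟩ <;>
    exact ENNReal.mul_lt_top ENNReal.ofReal_lt_top (measure_lt_top _ _)

/-- The product measure on edge-indicators modelling `G(n,p)`. -/
noncomputable def gnp (n : ℕ) (p : ℝ) : Measure (Sym2 (Fin n) → Bool) :=
  Measure.pi fun _ => bern p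

/-- The graph on `Fin n` determined by the edge indicators `ω`. -/
def graphOf {n : ℕ} (ω : Sym2 (Fin n) → Bool) : SimpleGraph (Fin n) where
  Adj u v := u ≠ v ∧ ω s(u, v) = true
  symm := by
    constructor
    intro u v h
    exact ⟨h.1.symm, by rw [Sym2.eq_swap]; exact h.2⟩
  loopless := ⟨fun u h => h.1 rfl⟩

/-- The number of `C↻ₖ`-free orientations of a graph. -/
noncomputable def countCkFree {V : Type*} (k : ℕ) (G : SimpleGraph V) : ℕ :=
  Nat.card {D : GraphOrientation G // ¬ D.HasDirCycle k}


section Helpers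

set_option linter.unusedSectionVars false

lemma ncard_biUnion_le' {V : Type*} [Fintype V] {ι : Type*} [DecidableEq ι]
    (s : Finset ι) (f : ι → Set V) :
    (⋃ i ∈ s, f i).ncard ≤ ∑ i ∈ s, (f i).ncard := by
  classical
  induction s using Finset.induction_on with
  | empty => simp
  | insert _ _ hx ih =>
    rename_i a s2
    rw [Finset.set_biUnion_insert, Finset.sum_insert hx]
    exact le_trans (Set.ncard_union_le _ _) (by omega)

lemma ncard_pairs_le' {V : Type*} [Fintype V] (I : Set V) (fib : V → Set V) {S : Set (V × V)}
    (h : S ⊆ {q : V × V | q.1 ∈ I ∧ q.2 ∈ fib q.1}) :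
    S.ncard ≤ ∑ w ∈ I.toFinite.toFinset, (fib w).ncard := by
  classical
  have h2 : S ⊆ ⋃ w ∈ I.toFinite.toFinset, (Prod.mk w '' fib w) := by
    intro q hq
    obtain ⟨h1, h2⟩ := h hq
    exact Set.mem_biUnion ((Set.Finite.mem_toFinset _).2 h1) ⟨q.2, h2, rfl⟩
  refine le_trans (Set.ncard_le_ncard h2 (Set.toFinite _)) ?_
  refine le_trans (ncard_biUnion_le' _ _) ?_
  exact Finset.sum_le_sum fun w _ => Set.ncard_image_le (Set.toFinite _)

lemma greedy_exists' {V : Type*} [Fintype V] [DecidableEq V] (N : Finset V) (β : V → Set V)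
    {t : ℝ} (ht : 0 < t) :
    ∃ S : Finset V, S ⊆ N ∧ (t * S.card ≤ ((⋃ w ∈ (S : Set V), β w).ncard : ℝ)) ∧
      ∀ w ∈ N, (((β w) \ ⋃ w' ∈ (S : Set V), β w').ncard : ℝ) < t := by
  classical
  set U : Finset V → Set V := fun S => ⋃ w ∈ (S : Set V), β w with hU
  set 𝒮 : Finset (Finset V) := N.powerset.filter
    (fun S => t * S.card ≤ ((U S).ncard : ℝ)) with h𝒮
  have hS0 : ∅ ∈ 𝒮 := by
    simp [h𝒮, hU]
  obtain ⟨S, hSmem, hmax⟩ := Finset.exists_max_image 𝒮 (fun S => (U S).ncard) ⟨∅, hS0⟩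
  rw [h𝒮, Finset.mem_filter, Finset.mem_powerset] at hSmem
  obtain ⟨hSN, hSP⟩ := hSmem
  refine ⟨S, hSN, hSP, ?_⟩
  intro w hw
  by_contra hcon
  push_neg at hcon
  have hwS : w ∉ S := by
    intro hwS
    have : β w \ U S = ∅ := by
      rw [Set.diff_eq_empty]
      exact Set.subset_biUnion_of_mem (u := fun w => β w) (Finset.mem_coe.2 hwS)
    rw [this] at hcon
    simp only [Set.ncard_empty, Nat.cast_zero] at hcon
    exact absurd (lt_of_lt_of_le ht hcon) (lt_irrefl 0)
  have hUS' : U (insert w S) = β w ∪ U S := by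
    rw [hU]
    simp only [Finset.coe_insert, Set.biUnion_insert]
  have hcard' : (U (insert w S)).ncard = (β w \ U S).ncard + (U S).ncard := by
    rw [hUS', ← Set.diff_union_self, Set.ncard_union_eq Set.disjoint_sdiff_left
      (Set.toFinite _) (Set.toFinite _)]
  have hdpos : 1 ≤ (β w \ U S).ncard := by
    have h0 : (0:ℝ) < ((β w \ U S).ncard : ℝ) := lt_of_lt_of_le ht hcon
    exact_mod_cast Nat.one_le_cast.mpr (Nat.cast_pos.mp h0)
  have hmem' : insert w S ∈ 𝒮 := by
    rw [h𝒮, Finset.mem_filter, Finset.mem_powerset]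
    constructor
    · exact Finset.insert_subset hw hSN
    · rw [Finset.card_insert_of_notMem hwS, hcard']
      push_cast
      linarith
  have := hmax _ hmem'
  rw [hcard'] at this
  omega

lemma card_small_sets' {γ : Type*} [Fintype γ] [DecidableEq γ] (K : ℕ) :
    Nat.card {S : Set γ // S.ncard ≤ K} ≤ (K + 1) * (Fintype.card γ + 1) ^ K := by
  classical
  have hinj : Function.Injective
      (fun S : {S : Set γ // S.ncard ≤ K} =>
        (⟨S.1.toFinite.toFinset, by rw [← Set.ncard_eq_toFinset_card]; exact S.2⟩ :
          {T : Finset γ // T.card ≤ K})) := by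
    intro S1 S2 h
    have h2 := congrArg (fun T : {T : Finset γ // T.card ≤ K} => (T.1 : Set γ)) h
    simp only [Set.Finite.coe_toFinset] at h2
    exact Subtype.ext h2
  refine le_trans (Nat.card_le_card_of_injective _ hinj) ?_
  rw [Nat.card_eq_fintype_card, Fintype.card_subtype]
  have hsub : (Finset.univ.filter (fun T : Finset γ => T.card ≤ K)) ⊆
      (Finset.range (K+1)).biUnion (fun i => Finset.powersetCard i Finset.univ) := by
    intro T hT
    rw [Finset.mem_filter] at hT
    refine Finset.mem_biUnion.2 ⟨T.card, Finset.mem_range.2 (by omega), ?_⟩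
    rw [Finset.mem_powersetCard]
    exact ⟨Finset.subset_univ T, rfl⟩
  refine le_trans (Finset.card_le_card hsub) ?_
  refine le_trans (Finset.card_biUnion_le) ?_
  have : ∀ i ∈ Finset.range (K+1),
      (Finset.powersetCard i Finset.univ : Finset (Finset γ)).card
        ≤ (Fintype.card γ + 1) ^ K := by
    intro i hi
    rw [Finset.card_powersetCard, Finset.card_univ]
    calc (Fintype.card γ).choose i ≤ (Fintype.card γ) ^ i := Nat.choose_le_pow _ _
      _ ≤ (Fintype.card γ + 1) ^ i := Nat.pow_le_pow_left (by omega) _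
      _ ≤ (Fintype.card γ + 1) ^ K := Nat.pow_le_pow_right (by omega)
        (by rw [Finset.mem_range] at hi; omega)
  refine le_trans (Finset.sum_le_sum this) ?_
  rw [Finset.sum_const, Finset.card_range, smul_eq_mul]

namespace GraphOrientation

variable {V : Type*} {G : SimpleGraph V}

lemma pathEdge_mono' {D : GraphOrientation G} {X X' : Set V} (h : X ⊆ X') {k : ℕ} {u v : V}
    (hp : D.PathEdge X' k u v) : D.PathEdge X k u v := by
  obtain ⟨c, h1, h2, h3, h4, h5⟩ := hp
  exact ⟨c, h1, fun i hi => h2 i (h hi), h3, h4, h5⟩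

lemma pathEdge_imp' {G' : SimpleGraph V} {D : GraphOrientation G} {D' : GraphOrientation G'}
    {X : Set V} (h : ∀ u v, u ∉ X → v ∉ X → D.dir u v → D'.dir u v) {k : ℕ} {u v : V}
    (hp : D.PathEdge X k u v) : D'.PathEdge X k u v := by
  obtain ⟨c, h1, h2, h3, h4, h5⟩ := hp
  exact ⟨c, h1, h2, h3, h4, fun i => h _ _ (h2 _) (h2 _) (h5 i)⟩

lemma pathEdge_cons' {D : GraphOrientation G} {X : Set V} {k : ℕ} {u w v : V}
    (hd : D.dir u w) (hp : D.PathEdge (insert u X) k w v) (hu : u ∉ X) :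
    D.PathEdge X (k + 1) u v := by
  obtain ⟨c, h1, h2, h3, h4, h5⟩ := hp
  refine ⟨Fin.cons u c, ?_, ?_, by simp, ?_, ?_⟩
  · rw [Fin.cons_injective_iff]
    refine ⟨fun ⟨i, hi⟩ => h2 i (hi ▸ Set.mem_insert _ _), h1⟩
  · intro i
    induction i using Fin.cases with
    | zero => simpa using hu
    | succ j => simpa using fun hj => h2 j (Set.mem_insert_iff.2 (Or.inr hj))
  · rw [← Fin.succ_last, Fin.cons_succ]; exact h4
  · intro i
    induction i using Fin.cases with
    | zero =>
      have e0 : (Fin.cons u c : Fin (k+2) → V) ((0 : Fin (k+1)).castSucc) = u := by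
        rw [Fin.castSucc_zero, Fin.cons_zero]
      have e1 : (Fin.cons u c : Fin (k+2) → V) ((0 : Fin (k+1)).succ) = c 0 := Fin.cons_succ _ _ _
      rw [e0, e1, h3]; exact hd
    | succ j =>
      have e0 : (j.succ).castSucc = (j.castSucc).succ := (Fin.succ_castSucc j).symm
      rw [e0, Fin.cons_succ, Fin.cons_succ]
      exact h5 j

lemma pathEdge_snoc' {D : GraphOrientation G} {X : Set V} {k : ℕ} {u w v : V}
    (hp : D.PathEdge (insert v X) k u w) (hd : D.dir w v) (hv : v ∉ X) :
    D.PathEdge X (k + 1) u v := by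
  obtain ⟨c, h1, h2, h3, h4, h5⟩ := hp
  have hvr : ∀ i, c i ≠ v := fun i hi => h2 i (hi ▸ Set.mem_insert _ _)
  refine ⟨Fin.snoc c v, ?_, ?_, ?_, by simp, ?_⟩
  · intro i j hij
    induction i using Fin.lastCases with
    | last =>
      induction j using Fin.lastCases with
      | last => rfl
      | cast j' =>
        rw [Fin.snoc_last, Fin.snoc_castSucc] at hij
        exact absurd hij.symm (hvr j')
    | cast i' =>
      induction j using Fin.lastCases with
      | last =>
        rw [Fin.snoc_last, Fin.snoc_castSucc] at hij
        exact absurd hij (hvr i')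
      | cast j' =>
        rw [Fin.snoc_castSucc, Fin.snoc_castSucc] at hij
        exact congrArg Fin.castSucc (h1 hij)
  · intro i
    induction i using Fin.lastCases with
    | last => simpa using hv
    | cast i' => simpa using fun hi => h2 i' (Set.mem_insert_iff.2 (Or.inr hi))
  · have : (0 : Fin (k+2)) = (0 : Fin (k+1)).castSucc := by simp
    rw [this, Fin.snoc_castSucc]; exact h3
  · intro i
    induction i using Fin.lastCases with
    | last =>
      have e0 : (Fin.last k).succ = Fin.last (k+1) := Fin.succ_last k
      have e1 : (Fin.snoc c v : Fin (k+2) → V) ((Fin.last k).castSucc) = c (Fin.last k) :=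
        Fin.snoc_castSucc _ _ _
      rw [e1, e0, Fin.snoc_last, h4]; exact hd
    | cast j =>
      have e0 : (j.castSucc).succ = (j.succ).castSucc := Fin.succ_castSucc j
      rw [e0, Fin.snoc_castSucc, Fin.snoc_castSucc]
      exact h5 j

end GraphOrientation

end Helpers
set_option maxHeartbeats 4000000

/-- Proposition 4.1. Given an `r`-frame `(A, H, B, X)` with
`2 ≤ r ≤ ℓ`, there is a family `𝒞` of digraphs on `A ∪ V(H)` containing the
`A`–`V(H)` edges of every orientation in `D_{r-1}(G) ∩ S_r(G, H⃗, B, X)`, each with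
at most `ℓα²` antiparallel pairs, with `|𝒞| ≤ exp(4 α p^{-1/ℓ} log n)`. -/
theorem container_like_proposition
    (ℓ n : ℕ) (p : ℝ) (hp0 : 0 < p) (hp1 : p ≤ ((2 * (ℓ : ℝ)) ^ ℓ)⁻¹)
    (VH : Set (Fin n)) (H : SimpleGraph (Fin n))
    (hHsupp : ∀ ⦃u v⦄, H.Adj u v → u ∈ VH ∧ v ∈ VH)
    (Hd : GraphOrientation H)
    (r : ℕ) (hr2 : 2 ≤ r) (hrℓ : r ≤ ℓ)
    (A B X : Set (Fin n)) (hAVH : Disjoint A VH) (hB : B ⊆ VH) (hX : X ⊆ VH)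
    (hBX : Disjoint B X)
    (hAcard : (A.ncard : ℝ) = alphaP n p / 2)
    (hBlo : (r : ℝ) * alphaP n p ≤ B.ncard)
    (hBhi : (B.ncard : ℝ) ≤ (ℓ : ℝ) * alphaP n p)
    (hXcard : (X.ncard : ℝ) ≤ ((ℓ : ℝ) + 1 - r) * alphaP n p) :
    ∃ 𝒞 : Set (Set (Fin n × Fin n)), 𝒞.Finite ∧
      -- the elements of `𝒞` are digraphs on the vertex set `A ∪ V(H)`
      (∀ C ∈ 𝒞, ∀ e ∈ C, e.1 ∈ A ∪ VH ∧ e.2 ∈ A ∪ VH) ∧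
      -- (i): every relevant orientation has its `A`–`V(H)` edges inside some container
      (∀ G : SimpleGraph (Fin n),
        (∀ ⦃u v⦄, G.Adj u v → u ∈ A ∪ VH ∧ v ∈ A ∪ VH) →
        (∀ u v, u ∈ VH → v ∈ VH → (G.Adj u v ↔ H.Adj u v)) →
        ∀ D : GraphOrientation G,
          ¬ D.HasDirCycle (ℓ + 2) →
          D.LocallyDense (A ∪ VH) p ℓ 1 (alphaP n p) →
          D.LocallyDense (A ∪ VH) p ℓ (r - 1) (alphaP n p) →
          D.Extends Hd →
          (∀ a ∈ A, (D.dBoth X r a B : ℝ) ≤ p ^ (((ℓ : ℝ) - r + 1) / ℓ) * B.ncard) →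
          ∃ C ∈ 𝒞, ∀ u v, D.dir u v →
            (u ∈ A ∧ v ∈ VH) ∨ (u ∈ VH ∧ v ∈ A) → (u, v) ∈ C) ∧
      -- (ii): few antiparallel pairs in each container
      (∀ C ∈ 𝒞,
        ({z : Sym2 (Fin n) | ∃ u v, z = s(u, v) ∧ (u, v) ∈ C ∧ (v, u) ∈ C}.ncard : ℝ)
          ≤ (ℓ : ℝ) * alphaP n p ^ 2) ∧
      -- (iii): few containers
      ((𝒞.ncard : ℝ) ≤ Real.exp (4 * alphaP n p * p ^ (-(1 : ℝ) / ℓ) * Real.log n)) := by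
  classical
  set aR := alphaP n p with haR_def
  have hlogn : 0 ≤ Real.log n := Real.log_natCast_nonneg n
  have haR0 : 0 ≤ aR := by
    rw [haR_def, alphaP]; positivity
  set q : ℝ := p ^ (-(1:ℝ)/(ℓ:ℝ)) with hq_def
  have hq0 : 0 < q := Real.rpow_pos_of_pos hp0 _
  have hℓ2 : 2 ≤ ℓ := hr2.trans hrℓ
  have hℓR : (2:ℝ) ≤ (ℓ:ℝ) := by exact_mod_cast hℓ2
  have hℓpos : (0:ℝ) < (ℓ:ℝ) := by linarith
  have hrR : (2:ℝ) ≤ (r:ℝ) := by exact_mod_cast hr2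
  have hrℓR : (r:ℝ) ≤ (ℓ:ℝ) := by exact_mod_cast hrℓ
  have h2ℓpow : (16:ℝ) ≤ (2*(ℓ:ℝ))^ℓ := by
    calc (16:ℝ) = 4^(2:ℕ) := by norm_num
    _ ≤ (2*(ℓ:ℝ))^(2:ℕ) := by nlinarith
    _ ≤ (2*(ℓ:ℝ))^ℓ := pow_le_pow_right₀ (by linarith) hℓ2
  have hp16 : p ≤ 1/16 := by
    refine le_trans hp1 ?_
    rw [inv_le_comm₀ (by linarith) (by norm_num)]
    simpa using h2ℓpow
  have hp1' : p ≤ 1 := by linarith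
  have hp1ℓ : p ^ ((1:ℝ)/(ℓ:ℝ)) ≤ 1/(2*(ℓ:ℝ)) := by
    have h1 : p ^ ((1:ℝ)/(ℓ:ℝ)) ≤ (((2*(ℓ:ℝ))^ℓ)⁻¹) ^ ((1:ℝ)/(ℓ:ℝ)) :=
      Real.rpow_le_rpow hp0.le hp1 (by positivity)
    refine le_trans h1 ?_
    rw [← Real.rpow_natCast (2*(ℓ:ℝ)) ℓ, ← Real.rpow_neg (by linarith),
      ← Real.rpow_mul (by linarith)]
    rw [show -(ℓ:ℝ) * ((1:ℝ)/(ℓ:ℝ)) = -1 by field_simp]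
    rw [Real.rpow_neg_one, one_div]
  have hppow_pos : (0:ℝ) < p ^ ((1:ℝ)/(ℓ:ℝ)) := Real.rpow_pos_of_pos hp0 _
  have hq2ℓ : 2*(ℓ:ℝ) ≤ q := by
    have h2 := inv_anti₀ hppow_pos hp1ℓ
    rw [one_div, inv_inv] at h2
    rw [hq_def, neg_div, Real.rpow_neg hp0.le]
    exact h2
  have hq4 : (4:ℝ) ≤ q := by linarith
  have hqp : q ≤ p⁻¹ := by
    rw [hq_def, ← Real.rpow_neg_one p]
    exact Real.rpow_le_rpow_of_exponent_ge hp0 hp1'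
      (by rw [neg_div, neg_le_neg_iff, div_le_one hℓpos]; linarith)
  set E : ℝ := ((ℓ:ℝ) - r + 2)/ℓ with hE_def
  have hpE0 : (0:ℝ) < p ^ E := Real.rpow_pos_of_pos hp0 _
  have hE'E : p ^ (((ℓ:ℝ) - r + 1)/ℓ) = q * p^E := by
    rw [hq_def, hE_def, ← Real.rpow_add hp0]
    congr 1
    field_simp
    ring
  have hE'1ℓ : p ^ (((ℓ:ℝ) - r + 1)/ℓ) ≤ p ^ ((1:ℝ)/(ℓ:ℝ)) :=
    Real.rpow_le_rpow_of_exponent_ge hp0 hp1'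
      (by rw [div_le_div_iff_of_pos_right hℓpos]; linarith)
  set t1 : ℝ := (3/16) * p^E * (B.ncard : ℝ) with ht1_def
  set K : ℕ := ⌈(16/3) * q⌉₊ with hK_def
  set r' : ℕ := r - 1 with hr'_def
  have hr'1 : r' + 1 = r := by omega
  set Rp : Fin n → Set (Fin n) := fun w => {b | b ∈ B ∧ Hd.PathEdge (X ∪ A) r' w b} with hRp_def
  set Rm : Fin n → Set (Fin n) := fun w => {b | b ∈ B ∧ Hd.PathEdge (X ∪ A) r' b w} with hRm_def
  set Up : (Fin n → Set (Fin n × Bool)) → Fin n → Set (Fin n) :=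
    fun g x => ⋃ w ∈ {w | (w, true) ∈ g x}, Rp w with hUp_def
  set Um : (Fin n → Set (Fin n × Bool)) → Fin n → Set (Fin n) :=
    fun g x => ⋃ w ∈ {w | (w, false) ∈ g x}, Rm w with hUm_def
  set condp : (Fin n → Set (Fin n × Bool)) → Fin n → Fin n → Prop :=
    fun g x w => ((Rp w \ Up g x).ncard : ℝ) < t1 with hcondp_def
  set condm : (Fin n → Set (Fin n × Bool)) → Fin n → Fin n → Prop :=
    fun g x w => ((Rm w \ Um g x).ncard : ℝ) < t1 with hcondm_def
  set Cof : (Fin n → Set (Fin n × Bool)) → Set (Fin n × Fin n) := fun g =>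
    {e | (e.1 ∈ A ∧ e.2 ∈ VH ∧ condp g e.1 e.2) ∨
      (e.1 ∈ VH ∧ e.2 ∈ A ∧ condm g e.2 e.1)} with hCof_def
  set Qg : (Fin n → Set (Fin n × Bool)) → Fin n → Set (Fin n) :=
    fun g x => {w | w ∈ VH ∧ condp g x w ∧ condm g x w} with hQg_def
  set 𝒢 : Set (Fin n → Set (Fin n × Bool)) :=
    {g | (∀ x, x ∉ A → g x = ∅) ∧ (∀ x ∈ A, (g x).ncard ≤ K) ∧
      (∀ x ∈ A, ((Qg g x \ (B ∪ X)).ncard : ℝ) ≤ aR)} with h𝒢_def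
  refine ⟨Cof '' 𝒢, Set.toFinite _, ?_, ?_, ?_, ?_⟩
  · rintro C ⟨g, hg, rfl⟩ e he
    rcases he with ⟨h1, h2, -⟩ | ⟨h1, h2, -⟩
    · exact ⟨Or.inl h1, Or.inr h2⟩
    · exact ⟨Or.inr h1, Or.inl h2⟩
  · -- (i) covering
    intro G hGsupp hGH D hcyc hd1 hdr hext hsparse
    have hDH : ∀ u v : Fin n, u ∉ X ∪ A → v ∉ X ∪ A → D.dir u v → Hd.dir u v := by
      intro u v hu hv hd
      have hadj := D.dir_adj hd
      have h1 := hGsupp hadj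
      have hu' : u ∈ VH := h1.1.resolve_left (fun h => hu (Set.mem_union_right _ h))
      have hv' : v ∈ VH := h1.2.resolve_left (fun h => hv (Set.mem_union_right _ h))
      have hH : H.Adj u v := (hGH u v hu' hv').1 hadj
      rcases Hd.total hH with h | h
      · exact h
      · exact absurd (hext h) (D.asymm hd)
    have hHD : ∀ u v : Fin n, u ∉ X ∪ A → v ∉ X ∪ A → Hd.dir u v → D.dir u v :=
      fun u v _ _ h => hext h
    by_cases hAne : A.Nonempty
    swap
    · rw [Set.not_nonempty_iff_eq_empty] at hAne
      refine ⟨Cof (fun _ => ∅), ⟨fun _ => ∅,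
        ⟨fun x _ => rfl, fun x hx => by rw [hAne] at hx; exact absurd hx (Set.notMem_empty x),
          fun x hx => by rw [hAne] at hx; exact absurd hx (Set.notMem_empty x)⟩, rfl⟩, ?_⟩
      intro u v hdir hcase
      rcases hcase with ⟨hu, -⟩ | ⟨-, hv⟩
      · rw [hAne] at hu; exact absurd hu (Set.notMem_empty u)
      · rw [hAne] at hv; exact absurd hv (Set.notMem_empty v)
    -- main case: A nonempty
    have hmpos : 0 < A.ncard := (Set.ncard_pos (Set.toFinite _)).2 hAne
    have haR2 : (2:ℝ) ≤ aR := by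
      have h1 : (1:ℝ) ≤ (A.ncard : ℝ) := by exact_mod_cast hmpos
      rw [hAcard] at h1; linarith only [h1]
    have hBge : (4:ℝ) ≤ (B.ncard : ℝ) := by
      have h1 : (2:ℝ)*2 ≤ (r:ℝ)*aR :=
        mul_le_mul hrR haR2 (by norm_num) (by linarith only [hrR])
      linarith only [h1, hBlo]
    have ht1pos : (0:ℝ) < t1 := by
      rw [ht1_def]
      apply mul_pos (mul_pos (by norm_num) hpE0) (by linarith only [hBge])
    have hsB : p ^ (((ℓ:ℝ)-r+1)/ℓ) * (B.ncard:ℝ) ≤ aR/2 := by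
      have h1 : p ^ (((ℓ:ℝ)-r+1)/ℓ) ≤ 1/(2*(ℓ:ℝ)) := le_trans hE'1ℓ hp1ℓ
      have h2 : p ^ (((ℓ:ℝ)-r+1)/ℓ) * (B.ncard:ℝ) ≤ (1/(2*(ℓ:ℝ))) * ((ℓ:ℝ) * aR) :=
        mul_le_mul h1 hBhi (by positivity) (by positivity)
      calc p ^ (((ℓ:ℝ)-r+1)/ℓ) * (B.ncard:ℝ) ≤ (1/(2*(ℓ:ℝ))) * ((ℓ:ℝ) * aR) := h2
        _ = aR/2 := by field_simp
    have hsB4 : p ^ (((ℓ:ℝ)-r+1)/ℓ) * (B.ncard:ℝ) ≤ (B.ncard:ℝ)/4 := by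
      have h1 : p ^ (((ℓ:ℝ)-r+1)/ℓ) ≤ 1/(2*(ℓ:ℝ)) := le_trans hE'1ℓ hp1ℓ
      have h2 : (1:ℝ)/(2*(ℓ:ℝ)) ≤ 1/4 := by
        rw [div_le_div_iff₀ (by linarith) (by norm_num)]
        linarith
      have h3 : p ^ (((ℓ:ℝ)-r+1)/ℓ) * (B.ncard:ℝ) ≤ (1/4) * (B.ncard:ℝ) :=
        mul_le_mul (le_trans h1 h2) le_rfl (by positivity) (by norm_num)
      linarith
    have hAX : ∀ x ∈ A, x ∉ X := fun x hx hxX => Set.disjoint_left.1 hAVH hx (hX hxX)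
    have hinsXA : ∀ x ∈ A, insert x X ⊆ X ∪ A := fun x hx =>
      Set.insert_subset_iff.2 ⟨Set.mem_union_right _ hx, Set.subset_union_left⟩
    have hRpD : ∀ x ∈ A, ∀ w, D.dir x w →
        Rp w ⊆ {b | b ∈ B ∧ D.PathEdge X r x b} := by
      intro x hx w hdir b hb
      obtain ⟨hbB, hpath⟩ := hb
      refine ⟨hbB, ?_⟩
      have h1 : D.PathEdge (X ∪ A) r' w b := GraphOrientation.pathEdge_imp' hHD hpath
      have h2 : D.PathEdge (insert x X) r' w b :=
        GraphOrientation.pathEdge_mono' (hinsXA x hx) h1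
      have h3 := GraphOrientation.pathEdge_cons' hdir h2 (hAX x hx)
      rwa [hr'1] at h3
    have hRmD : ∀ x ∈ A, ∀ w, D.dir w x →
        Rm w ⊆ {b | b ∈ B ∧ D.PathEdge X r b x} := by
      intro x hx w hdir b hb
      obtain ⟨hbB, hpath⟩ := hb
      refine ⟨hbB, ?_⟩
      have h1 : D.PathEdge (X ∪ A) r' b w := GraphOrientation.pathEdge_imp' hHD hpath
      have h2 : D.PathEdge (insert x X) r' b w :=
        GraphOrientation.pathEdge_mono' (hinsXA x hx) h1
      have h3 := GraphOrientation.pathEdge_snoc' h2 hdir (hAX x hx)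
      rwa [hr'1] at h3
    have hmain : ∀ x ∈ A, ∃ gx : Set (Fin n × Bool),
        gx.ncard ≤ K ∧
        (∀ w ∈ VH, D.dir x w →
          ((Rp w \ ⋃ w' ∈ {w' | (w', true) ∈ gx}, Rp w').ncard : ℝ) < t1) ∧
        (∀ w ∈ VH, D.dir w x →
          ((Rm w \ ⋃ w' ∈ {w' | (w', false) ∈ gx}, Rm w').ncard : ℝ) < t1) ∧
        (⋃ w' ∈ {w' | (w', true) ∈ gx}, Rp w') ⊆ {b | b ∈ B ∧ D.PathEdge X r x b} ∧
        (⋃ w' ∈ {w' | (w', false) ∈ gx}, Rm w') ⊆ {b | b ∈ B ∧ D.PathEdge X r b x} := by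
      intro x hx
      obtain ⟨Sp, hSpN, hSpcard, hSpterm⟩ :=
        greedy_exists' ((VH ∩ {w | D.dir x w}).toFinite.toFinset) Rp ht1pos
      obtain ⟨Sm, hSmN, hSmcard, hSmterm⟩ :=
        greedy_exists' ((VH ∩ {w | D.dir w x}).toFinite.toFinset) Rm ht1pos
      set gx : Set (Fin n × Bool) := ((fun w => (w, true)) '' (Sp : Set (Fin n))) ∪
        ((fun w => (w, false)) '' (Sm : Set (Fin n))) with hgx_def
      have hFp : {w' | (w', true) ∈ gx} = (Sp : Set (Fin n)) := by
        ext w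
        simp [hgx_def]
      have hFm : {w' | (w', false) ∈ gx} = (Sm : Set (Fin n)) := by
        ext w
        simp [hgx_def]
      have hUpsub : (⋃ w' ∈ (Sp : Set (Fin n)), Rp w') ⊆
          {b | b ∈ B ∧ D.PathEdge X r x b} := by
        intro b hb
        rw [Set.mem_iUnion₂] at hb
        obtain ⟨w', hw', hbR⟩ := hb
        have hw'N := hSpN hw'
        rw [Set.Finite.mem_toFinset] at hw'N
        exact hRpD x hx w' hw'N.2 hbR
      have hUmsub : (⋃ w' ∈ (Sm : Set (Fin n)), Rm w') ⊆
          {b | b ∈ B ∧ D.PathEdge X r b x} := by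
        intro b hb
        rw [Set.mem_iUnion₂] at hb
        obtain ⟨w', hw', hbR⟩ := hb
        have hw'N := hSmN hw'
        rw [Set.Finite.mem_toFinset] at hw'N
        exact hRmD x hx w' hw'N.2 hbR
      have hcard : ((Sp.card + Sm.card : ℕ) : ℝ) ≤ (16/3) * q := by
        have h2 : ((⋃ w' ∈ (Sp : Set (Fin n)), Rp w').ncard : ℝ)
            ≤ ({b | b ∈ B ∧ D.PathEdge X r x b}.ncard : ℝ) := by
          exact_mod_cast Set.ncard_le_ncard hUpsub (Set.toFinite _)
        have h3 : ((⋃ w' ∈ (Sm : Set (Fin n)), Rm w').ncard : ℝ)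
            ≤ ({b | b ∈ B ∧ D.PathEdge X r b x}.ncard : ℝ) := by
          exact_mod_cast Set.ncard_le_ncard hUmsub (Set.toFinite _)
        have h4 : (D.dBoth X r x B : ℝ) = ({b | b ∈ B ∧ D.PathEdge X r x b}.ncard : ℝ)
            + ({b | b ∈ B ∧ D.PathEdge X r b x}.ncard : ℝ) := by
          rw [GraphOrientation.dBoth, Nat.cast_add]
        have h5 := hsparse x hx
        have h6 : q * p^E * (B.ncard:ℝ) = ((16:ℝ)/3 * q) * t1 := by
          rw [ht1_def]; ring
        have h7 : t1 * Sp.card + t1 * Sm.card ≤ ((16:ℝ)/3 * q) * t1 := by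
          rw [← h6, ← hE'E]
          calc t1 * Sp.card + t1 * Sm.card
              ≤ ({b | b ∈ B ∧ D.PathEdge X r x b}.ncard : ℝ)
                + ({b | b ∈ B ∧ D.PathEdge X r b x}.ncard : ℝ) :=
                add_le_add (le_trans hSpcard h2) (le_trans hSmcard h3)
            _ = (D.dBoth X r x B : ℝ) := h4.symm
            _ ≤ p ^ (((ℓ:ℝ) - r + 1)/ℓ) * (B.ncard:ℝ) := h5
        have h8 : ((Sp.card + Sm.card : ℕ):ℝ) * t1 ≤ ((16:ℝ)/3 * q) * t1 := by
          push_cast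
          linarith only [h7]
        exact le_of_mul_le_mul_right h8 ht1pos
      have hcardK : Sp.card + Sm.card ≤ K := by
        have h1 : ((Sp.card + Sm.card : ℕ):ℝ) ≤ (K:ℝ) := by
          refine le_trans hcard ?_
          rw [hK_def]
          exact Nat.le_ceil _
        exact_mod_cast h1
      have hgxcard : gx.ncard ≤ K := by
        refine le_trans (Set.ncard_union_le _ _) (le_trans ?_ hcardK)
        have e1 : ((fun w => (w, true)) '' (Sp : Set (Fin n))).ncard ≤ Sp.card := by
          refine le_trans (Set.ncard_image_le (Set.toFinite _)) ?_
          rw [Set.ncard_coe_finset]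
        have e2 : ((fun w => (w, false)) '' (Sm : Set (Fin n))).ncard ≤ Sm.card := by
          refine le_trans (Set.ncard_image_le (Set.toFinite _)) ?_
          rw [Set.ncard_coe_finset]
        omega
      refine ⟨gx, hgxcard, ?_, ?_, by rw [hFp]; exact hUpsub, by rw [hFm]; exact hUmsub⟩
      · intro w hw hdir
        rw [hFp]
        exact hSpterm w ((Set.Finite.mem_toFinset _).2 ⟨hw, hdir⟩)
      · intro w hw hdir
        rw [hFm]
        exact hSmterm w ((Set.Finite.mem_toFinset _).2 ⟨hw, hdir⟩)
    choose gfun hg1 hg2 hg3 hg4 hg5 using hmain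
    set gD : Fin n → Set (Fin n × Bool) :=
      fun x => if hx : x ∈ A then gfun x hx else ∅ with hgD_def
    have hUpx : ∀ x (hx : x ∈ A), Up gD x = ⋃ w' ∈ {w' | (w', true) ∈ gfun x hx}, Rp w' := by
      intro x hx
      simp only [hUp_def, hgD_def, dif_pos hx]
    have hUmx : ∀ x (hx : x ∈ A), Um gD x = ⋃ w' ∈ {w' | (w', false) ∈ gfun x hx}, Rm w' := by
      intro x hx
      simp only [hUm_def, hgD_def, dif_pos hx]
    have hQbound : ∀ x ∈ A, ((Qg gD x \ (B ∪ X)).ncard : ℝ) ≤ aR := by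
      intro x hx
      by_contra hcon
      push_neg at hcon
      set UU := Up gD x ∪ Um gD x with hUU_def
      have hUpB : Up gD x ⊆ {b | b ∈ B ∧ D.PathEdge X r x b} := by
        rw [hUpx x hx]; exact hg4 x hx
      have hUmB : Um gD x ⊆ {b | b ∈ B ∧ D.PathEdge X r b x} := by
        rw [hUmx x hx]; exact hg5 x hx
      have hUUB : UU ⊆ B := by
        rw [hUU_def]
        exact Set.union_subset (fun b hb => (hUpB hb).1) (fun b hb => (hUmB hb).1)
      have hUUcard : (UU.ncard : ℝ) ≤ p ^ (((ℓ:ℝ)-r+1)/ℓ) * (B.ncard:ℝ) := by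
        have h1 : UU.ncard ≤ {b | b ∈ B ∧ D.PathEdge X r x b}.ncard
            + {b | b ∈ B ∧ D.PathEdge X r b x}.ncard := by
          refine le_trans (Set.ncard_union_le _ _) ?_
          exact add_le_add (Set.ncard_le_ncard hUpB (Set.toFinite _))
            (Set.ncard_le_ncard hUmB (Set.toFinite _))
        have h2 : (UU.ncard : ℝ) ≤ (D.dBoth X r x B : ℝ) := by
          rw [GraphOrientation.dBoth]; exact_mod_cast h1
        exact le_trans h2 (hsparse x hx)
      have hUUaR : (UU.ncard : ℝ) ≤ aR/2 := le_trans hUUcard hsB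
      have hUUB4 : (UU.ncard : ℝ) ≤ (B.ncard:ℝ)/4 := le_trans hUUcard hsB4
      have hA'ex : 2*A.ncard ≤ (Qg gD x \ (B ∪ X)).ncard := by
        have h1 : ((2*A.ncard : ℕ):ℝ) ≤ ((Qg gD x \ (B ∪ X)).ncard : ℝ) := by
          push_cast
          rw [hAcard]
          linarith only [hcon]
        exact_mod_cast h1
      obtain ⟨A', hA'sub, hA'card⟩ := Set.exists_subset_card_eq hA'ex
      have hA'R : (A'.ncard : ℝ) = aR := by
        rw [hA'card]; push_cast; rw [hAcard]; ring
      have hA'mem : ∀ w ∈ A', w ∈ VH ∧ (((Rp w \ Up gD x).ncard : ℝ) < t1)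
          ∧ (((Rm w \ Um gD x).ncard : ℝ) < t1) ∧ w ∉ B ∧ w ∉ X := by
        intro w hw
        obtain ⟨hwQ, hwBX⟩ := hA'sub hw
        simp only [hQg_def, Set.mem_setOf_eq, hcondp_def, hcondm_def] at hwQ
        exact ⟨hwQ.1, hwQ.2.1, hwQ.2.2, fun h => hwBX (Or.inl h), fun h => hwBX (Or.inr h)⟩
      set B' := B \ UU with hB'_def
      set X' := X ∪ A ∪ UU with hX'_def
      have hUUle : UU.ncard ≤ B.ncard := Set.ncard_le_ncard hUUB (Set.toFinite _)
      have hB'card : (B'.ncard : ℝ) = (B.ncard:ℝ) - (UU.ncard:ℝ) := by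
        rw [hB'_def, Set.ncard_diff hUUB (Set.toFinite _), Nat.cast_sub hUUle]
      have hrcast : ((r' : ℕ):ℝ) = (r:ℝ) - 1 := by
        rw [hr'_def, Nat.cast_sub (by omega : 1 ≤ r), Nat.cast_one]
      have hlow := hdr A' B' X'
        (fun w hw => Or.inr ((hA'mem w hw).1))
        (fun b hb => Or.inr (hB hb.1))
        (by
          rw [hX'_def]
          exact Set.union_subset (Set.union_subset (fun y hy => Or.inr (hX hy))
            (fun y hy => Or.inl hy)) (fun y hy => Or.inr (hB (hUUB hy))))
        (Set.disjoint_left.2 (fun w hw hwB' => (hA'mem w hw).2.2.2.1 hwB'.1))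
        (Set.disjoint_left.2 (fun w hw hwX' => by
          obtain ⟨hVHw, -, -, hnB, hnX⟩ := hA'mem w hw
          rcases hwX' with (h | h) | h
          · exact hnX h
          · exact Set.disjoint_left.1 hAVH h hVHw
          · exact hnB (hUUB h)))
        (Set.disjoint_left.2 (fun b hb hbX' => by
          rcases hbX' with (h | h) | h
          · exact Set.disjoint_left.1 hBX hb.1 h
          · exact Set.disjoint_left.1 hAVH h (hB hb.1)
          · exact hb.2 h))
        hA'R
        (by
          rw [hB'card, hrcast]
          linarith only [hBlo, hUUaR, haR0])
        (by
          refine le_trans ?_ hBhi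
          have : B'.ncard ≤ B.ncard := Set.ncard_le_ncard Set.diff_subset (Set.toFinite _)
          exact_mod_cast this)
        (by
          rw [hrcast]
          have h1 : X'.ncard ≤ X.ncard + A.ncard + UU.ncard := by
            rw [hX'_def]
            refine le_trans (Set.ncard_union_le _ _) ?_
            have := Set.ncard_union_le X A
            omega
          have h2 : ((X'.ncard : ℕ):ℝ) ≤ (X.ncard:ℝ) + (A.ncard:ℝ) + (UU.ncard:ℝ) := by
            exact_mod_cast h1
          rw [hAcard] at h2
          linarith only [h2, hXcard, hUUaR])
      have hexp : ((ℓ:ℝ) - (r':ℕ) + 1)/(ℓ:ℝ) = E := by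
        rw [hrcast, hE_def]; ring_nf
      rw [hexp, hA'R] at hlow
      have hXsubX' : X ∪ A ⊆ X' := by rw [hX'_def]; exact Set.subset_union_left
      have hAfin_card : A'.toFinite.toFinset.card = 2*A.ncard := by
        rw [← Set.ncard_eq_toFinset_card A', hA'card]
      have hAfin_ne : A'.toFinite.toFinset.Nonempty := by
        rw [← Finset.card_pos, hAfin_card]; omega
      have hup1 : ({qq : Fin n × Fin n |
            qq.1 ∈ A' ∧ qq.2 ∈ B' ∧ D.PathEdge X' r' qq.1 qq.2}.ncard : ℝ) < aR * t1 := by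
        have hsubfib : {qq : Fin n × Fin n | qq.1 ∈ A' ∧ qq.2 ∈ B' ∧ D.PathEdge X' r' qq.1 qq.2}
            ⊆ {qq : Fin n × Fin n | qq.1 ∈ A' ∧ qq.2 ∈ (Rp qq.1 \ Up gD x)} := by
          rintro ⟨u, b⟩ ⟨hu, hb, hpath⟩
          refine ⟨hu, ⟨⟨hb.1, ?_⟩, fun hUp => hb.2 (Or.inl hUp)⟩⟩
          exact GraphOrientation.pathEdge_imp' hDH
            (GraphOrientation.pathEdge_mono' hXsubX' hpath)
        have h1 := ncard_pairs_le' A' (fun w => Rp w \ Up gD x) hsubfib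
        have h2 : ∑ w ∈ A'.toFinite.toFinset, (((Rp w \ Up gD x).ncard : ℕ):ℝ)
            < ∑ _w ∈ A'.toFinite.toFinset, t1 := by
          refine Finset.sum_lt_sum_of_nonempty hAfin_ne ?_
          intro w hw
          rw [Set.Finite.mem_toFinset] at hw
          exact (hA'mem w hw).2.1
        rw [Finset.sum_const, nsmul_eq_mul, hAfin_card] at h2
        have h3 : ((2*A.ncard : ℕ):ℝ) * t1 = aR * t1 := by
          push_cast; rw [hAcard]; ring
        calc ({qq : Fin n × Fin n |
              qq.1 ∈ A' ∧ qq.2 ∈ B' ∧ D.PathEdge X' r' qq.1 qq.2}.ncard : ℝ)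
            ≤ ∑ w ∈ A'.toFinite.toFinset, (((Rp w \ Up gD x).ncard : ℕ):ℝ) := by
              exact_mod_cast h1
          _ < ((2*A.ncard : ℕ):ℝ) * t1 := by push_cast at h2 ⊢; linarith only [h2]
          _ = aR * t1 := h3
      have hup2 : ({qq : Fin n × Fin n |
            qq.1 ∈ A' ∧ qq.2 ∈ B' ∧ D.PathEdge X' r' qq.2 qq.1}.ncard : ℝ) < aR * t1 := by
        have hsubfib : {qq : Fin n × Fin n | qq.1 ∈ A' ∧ qq.2 ∈ B' ∧ D.PathEdge X' r' qq.2 qq.1}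
            ⊆ {qq : Fin n × Fin n | qq.1 ∈ A' ∧ qq.2 ∈ (Rm qq.1 \ Um gD x)} := by
          rintro ⟨u, b⟩ ⟨hu, hb, hpath⟩
          refine ⟨hu, ⟨⟨hb.1, ?_⟩, fun hUm => hb.2 (Or.inr hUm)⟩⟩
          exact GraphOrientation.pathEdge_imp' hDH
            (GraphOrientation.pathEdge_mono' hXsubX' hpath)
        have h1 := ncard_pairs_le' A' (fun w => Rm w \ Um gD x) hsubfib
        have h2 : ∑ w ∈ A'.toFinite.toFinset, (((Rm w \ Um gD x).ncard : ℕ):ℝ)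
            < ∑ _w ∈ A'.toFinite.toFinset, t1 := by
          refine Finset.sum_lt_sum_of_nonempty hAfin_ne ?_
          intro w hw
          rw [Set.Finite.mem_toFinset] at hw
          exact (hA'mem w hw).2.2.1
        rw [Finset.sum_const, nsmul_eq_mul, hAfin_card] at h2
        have h3 : ((2*A.ncard : ℕ):ℝ) * t1 = aR * t1 := by
          push_cast; rw [hAcard]; ring
        calc ({qq : Fin n × Fin n |
              qq.1 ∈ A' ∧ qq.2 ∈ B' ∧ D.PathEdge X' r' qq.2 qq.1}.ncard : ℝ)
            ≤ ∑ w ∈ A'.toFinite.toFinset, (((Rm w \ Um gD x).ncard : ℕ):ℝ) := by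
              exact_mod_cast h1
          _ < ((2*A.ncard : ℕ):ℝ) * t1 := by push_cast at h2 ⊢; linarith only [h2]
          _ = aR * t1 := h3
      have hlow' : 2 * (aR * t1) ≤ (D.eBoth X' r' A' B' : ℝ) := by
        refine le_trans ?_ hlow
        rw [hB'card, ht1_def]
        have key : (0:ℝ) ≤ p^E * aR * ((B.ncard:ℝ)/4 - (UU.ncard:ℝ)) :=
          mul_nonneg (mul_nonneg hpE0.le haR0) (by linarith only [hUUB4])
        linarith only [key]
      have hupper : (D.eBoth X' r' A' B' : ℝ) < 2 * (aR * t1) := by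
        rw [GraphOrientation.eBoth, Nat.cast_add]
        linarith only [hup1, hup2]
      exact absurd hupper (not_lt.2 hlow')
    have hg𝒢 : gD ∈ 𝒢 := by
      refine ⟨fun x hx => by simp only [hgD_def]; rw [dif_neg hx], fun x hx => ?_, hQbound⟩
      simp only [hgD_def]
      rw [dif_pos hx]
      exact hg1 x hx
    refine ⟨Cof gD, Set.mem_image_of_mem _ hg𝒢, ?_⟩
    intro u v hdir hcase
    simp only [hCof_def, Set.mem_setOf_eq]
    rcases hcase with ⟨hu, hv⟩ | ⟨hu, hv⟩
    · refine Or.inl ⟨hu, hv, ?_⟩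
      simp only [hcondp_def]
      rw [hUpx u hu]
      exact hg2 u hu v hv hdir
    · refine Or.inr ⟨hu, hv, ?_⟩
      simp only [hcondm_def]
      rw [hUmx v hv]
      exact hg3 v hv u hu hdir
  · -- (ii) antiparallel pairs
    rintro C ⟨g, hg, rfl⟩
    obtain ⟨hg1, hg2, hg3⟩ := hg
    have hPsub : {z : Sym2 (Fin n) | ∃ u v, z = s(u,v) ∧ (u,v) ∈ Cof g ∧ (v,u) ∈ Cof g}
        ⊆ ⋃ x ∈ A.toFinite.toFinset, (fun w => s(x, w)) '' (Qg g x) := by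
      rintro z ⟨u, v, rfl, h1, h2⟩
      rcases h1 with ⟨hu, hv, hc⟩ | ⟨hu, hv, hc⟩
      · rcases h2 with ⟨hv', hu', -⟩ | ⟨hv', hu', hc'⟩
        · exact absurd hu' (Set.disjoint_left.1 hAVH hu)
        · refine Set.mem_biUnion ((Set.Finite.mem_toFinset _).2 hu) ⟨v, ⟨hv, hc, hc'⟩, rfl⟩
      · rcases h2 with ⟨hv', hu', hc'⟩ | ⟨hv', hu', -⟩
        · refine Set.mem_biUnion ((Set.Finite.mem_toFinset _).2 hv) ⟨u, ⟨hu, hc', hc⟩, ?_⟩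
          exact (Sym2.eq_swap).symm
        · exact absurd hu (Set.disjoint_left.1 hAVH hu')
    have h1 : {z : Sym2 (Fin n) | ∃ u v, z = s(u,v) ∧ (u,v) ∈ Cof g ∧ (v,u) ∈ Cof g}.ncard
        ≤ ∑ x ∈ A.toFinite.toFinset, (Qg g x).ncard := by
      refine le_trans (Set.ncard_le_ncard hPsub (Set.toFinite _)) ?_
      refine le_trans (ncard_biUnion_le' _ _) ?_
      exact Finset.sum_le_sum fun x _ => Set.ncard_image_le (Set.toFinite _)
    have h2 : ∀ x ∈ A.toFinite.toFinset, ((Qg g x).ncard : ℝ) ≤ 2*(ℓ:ℝ)*aR := by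
      intro x hx
      rw [Set.Finite.mem_toFinset] at hx
      have hsplit : Qg g x ⊆ (B ∪ X) ∪ (Qg g x \ (B ∪ X)) := by
        intro w hw
        by_cases hwBX : w ∈ B ∪ X
        · exact Or.inl hwBX
        · exact Or.inr ⟨hw, hwBX⟩
      have ha := Set.ncard_le_ncard hsplit (Set.toFinite _)
      have hb := Set.ncard_union_le (B ∪ X) (Qg g x \ (B ∪ X))
      have hc := Set.ncard_union_le B X
      have hd := hg3 x hx
      have hXR : (X.ncard : ℝ) ≤ ((ℓ:ℝ) - 1) * aR := by
        refine le_trans hXcard ?_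
        have h9 : ((ℓ:ℝ)+1-r) ≤ ((ℓ:ℝ)-1) := by linarith only [hrR]
        exact mul_le_mul_of_nonneg_right h9 haR0
      have hcast : ((Qg g x).ncard : ℝ) ≤ (B.ncard : ℝ) + (X.ncard : ℝ)
          + ((Qg g x \ (B ∪ X)).ncard : ℝ) := by
        have : (Qg g x).ncard ≤ B.ncard + X.ncard + (Qg g x \ (B ∪ X)).ncard := by omega
        exact_mod_cast this
      linarith only [hcast, hBhi, hXR, hd]
    have h3 : (A.toFinite.toFinset.card : ℝ) = aR / 2 := by
      rw [← Set.ncard_eq_toFinset_card A]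
      exact hAcard
    calc ({z : Sym2 (Fin n) | ∃ u v, z = s(u,v) ∧ (u,v) ∈ Cof g ∧ (v,u) ∈ Cof g}.ncard : ℝ)
        ≤ ∑ x ∈ A.toFinite.toFinset, ((Qg g x).ncard : ℝ) := by exact_mod_cast h1
      _ ≤ ∑ _x ∈ A.toFinite.toFinset, 2*(ℓ:ℝ)*aR := Finset.sum_le_sum h2
      _ = (A.toFinite.toFinset.card : ℝ) * (2*(ℓ:ℝ)*aR) := by
          rw [Finset.sum_const, nsmul_eq_mul]
      _ = (ℓ:ℝ) * aR^2 := by rw [h3]; ring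
  · -- (iii) counting
    have hstep1 : (Cof '' 𝒢).ncard ≤ 𝒢.ncard := Set.ncard_image_le (Set.toFinite _)
    have hstep2 : 𝒢.ncard ≤
        Nat.card (↥A → {S : Set (Fin n × Bool) // S.ncard ≤ K}) := by
      rw [← Nat.card_coe_set_eq]
      refine Nat.card_le_card_of_injective
        (fun g => fun a => (⟨g.1 a.1, g.2.2.1 a.1 a.2⟩ :
          {S : Set (Fin n × Bool) // S.ncard ≤ K})) ?_
      intro g1 g2 h
      apply Subtype.ext
      funext x
      by_cases hx : x ∈ A
      · exact congrArg Subtype.val (congrFun h ⟨x, hx⟩)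
      · rw [g1.2.1 x hx, g2.2.1 x hx]
    have hstep3 : Nat.card (↥A → {S : Set (Fin n × Bool) // S.ncard ≤ K})
        = (Nat.card {S : Set (Fin n × Bool) // S.ncard ≤ K}) ^ A.ncard := by
      rw [Nat.card_fun, Nat.card_coe_set_eq]
    have hN1 : Nat.card {S : Set (Fin n × Bool) // S.ncard ≤ K} ≤ (K+1) * (n*2+1)^K := by
      have h := card_small_sets' (γ := Fin n × Bool) K
      rwa [Fintype.card_prod, Fintype.card_fin, Fintype.card_bool] at h
    have hchainN : (Cof '' 𝒢).ncard ≤ ((K+1) * (n*2+1)^K) ^ A.ncard :=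
      le_trans hstep1 (le_trans (hstep2.trans_eq hstep3) (Nat.pow_le_pow_left hN1 _))
    rcases Nat.eq_zero_or_pos A.ncard with hm | hm
    · rw [hm, pow_zero] at hchainN
      refine le_trans (show ((Cof '' 𝒢).ncard : ℝ) ≤ 1 by exact_mod_cast hchainN)
        (Real.one_le_exp ?_)
      have : (0:ℝ) ≤ q := hq0.le
      positivity
    · -- nontrivial case
      have hm1 : (1:ℝ) ≤ (A.ncard : ℝ) := by exact_mod_cast hm
      have haR2 : (2:ℝ) ≤ aR := by rw [hAcard] at hm1; linarith
      have hlog2 : (0.6931471803:ℝ) < Real.log 2 := Real.log_two_gt_d9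
      have hlogn_pos : 0 < Real.log n := by
        by_contra hc
        push_neg at hc
        rw [haR_def, alphaP] at haR2
        have hnum : (2:ℝ)^6 * Real.log n ≤ 0 := by nlinarith [hc]
        have := div_nonpos_of_nonpos_of_nonneg hnum hp0.le
        linarith only [this, haR2]
      have hn2 : (2:ℕ) ≤ n := by
        by_contra hc
        push_neg at hc
        have hn1 : (n:ℝ) ≤ 1 := by exact_mod_cast Nat.lt_succ_iff.mp hc
        have := Real.log_nonpos (by positivity) hn1
        linarith
      have hlogn_ge : Real.log 2 ≤ Real.log n :=
        Real.log_le_log (by norm_num) (by exact_mod_cast hn2)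
      have h1p : (16:ℝ) ≤ 1/p := by
        rw [le_div_iff₀ hp0]; linarith
      have haR709 : (709:ℝ) ≤ aR := by
        rw [haR_def, alphaP]
        have e1 : (0.6931:ℝ) ≤ Real.log n := by linarith
        calc (709:ℝ) ≤ (64 * 0.6931) * 16 := by norm_num
          _ ≤ ((2:ℝ)^6 * Real.log n) * (1/p) := by
              refine mul_le_mul ?_ h1p (by norm_num) (by positivity)
              linarith only [e1]
          _ = (2:ℝ)^6 * Real.log n / p := by ring
      have hA354 : (354:ℝ) ≤ (A.ncard : ℝ) := by rw [hAcard]; linarith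
      have hA354' : 354 ≤ A.ncard := by exact_mod_cast hA354
      have hnA : (A.ncard : ℝ) + (B.ncard : ℝ) ≤ (n:ℝ) := by
        have hdisj : Disjoint A B := hAVH.mono_right hB
        have hun : (A ∪ B).ncard = A.ncard + B.ncard :=
          Set.ncard_union_eq hdisj (Set.toFinite _) (Set.toFinite _)
        have hle : (A ∪ B).ncard ≤ n := by
          have h := Set.ncard_le_ncard (Set.subset_univ (A ∪ B)) (Set.toFinite _)
          rwa [Set.ncard_univ, Nat.card_eq_fintype_card, Fintype.card_fin] at h
        exact_mod_cast hun ▸ hle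
      have haRn : (5:ℝ)/2 * aR ≤ (n:ℝ) := by
        have hB2 : 2 * aR ≤ (B.ncard : ℝ) := le_trans (by nlinarith) hBlo
        rw [hAcard] at hnA
        linarith
      have hn1770 : (1770:ℝ) ≤ (n:ℝ) := by linarith
      have hKle : (K:ℝ) + 1 ≤ 6*q := by
        have h1 : (K:ℝ) < (16/3)*q + 1 := Nat.ceil_lt_add_one (by positivity)
        linarith
      have hpinvaR : p⁻¹ * ((2:ℝ)^6 * Real.log n) = aR := by
        rw [haR_def, alphaP]
        field_simp
      have hpinv44 : p⁻¹ * 44 ≤ aR := by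
        rw [← hpinvaR]
        have h44 : (44:ℝ) ≤ (2:ℝ)^6 * Real.log n := by linarith only [hlogn_ge, hlog2]
        exact mul_le_mul_of_nonneg_left h44 (inv_pos.2 hp0).le
      have hK2n : (K:ℝ) + 1 ≤ (n:ℝ) := by
        have h6q : 6*q ≤ 6*p⁻¹ := by linarith only [hqp]
        have h6p : 6 * p⁻¹ ≤ (n:ℝ) := by linarith only [hpinv44, haRn, haR709]
        linarith only [hKle, h6q, h6p]
      have hK2n' : K + 1 ≤ n*2+1 := by
        have : ((K:ℕ):ℝ) + 1 ≤ (n:ℝ) := hK2n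
        have h2 : (K:ℕ) + 1 ≤ n := by exact_mod_cast this
        omega
      have hlog2n : Real.log (n*2+1 : ℕ) ≤ (4/3) * Real.log n := by
        have hcube : ((n*2+1 : ℕ):ℝ)^(3:ℕ) ≤ ((n:ℝ))^(4:ℕ) := by
          push_cast
          have hx : (1770:ℝ) ≤ (n:ℝ) := hn1770
          have hh1 : ((n:ℝ)*2+1)^(3:ℕ) ≤ (3*(n:ℝ))^(3:ℕ) :=
            pow_le_pow_left₀ (by linarith) (by linarith) _
          have hh2 : (3*(n:ℝ))^(3:ℕ) ≤ (n:ℝ)^(4:ℕ) := by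
            have h3 : (0:ℝ) ≤ (n:ℝ)^(3:ℕ) := by positivity
            calc (3*(n:ℝ))^(3:ℕ) = 27 * (n:ℝ)^(3:ℕ) := by ring
              _ ≤ (n:ℝ) * (n:ℝ)^(3:ℕ) := mul_le_mul_of_nonneg_right (by linarith) h3
              _ = (n:ℝ)^(4:ℕ) := by ring
          linarith
        have h1 : Real.log (((n*2+1:ℕ):ℝ)^(3:ℕ)) ≤ Real.log ((n:ℝ)^(4:ℕ)) :=
          Real.log_le_log (by positivity) hcube
        rw [Real.log_pow, Real.log_pow] at h1
        push_cast at h1 ⊢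
        linarith
      -- assemble
      have hc2 : ((K+1) * (n*2+1)^K) ^ A.ncard ≤ (n*2+1)^((K+1) * A.ncard) := by
        calc ((K+1) * (n*2+1)^K) ^ A.ncard ≤ ((n*2+1) * (n*2+1)^K) ^ A.ncard :=
              Nat.pow_le_pow_left (Nat.mul_le_mul_right _ hK2n') _
          _ = (n*2+1)^((K+1) * A.ncard) := by
              rw [← pow_succ', ← pow_mul]
      have hfinal : (((n*2+1):ℕ):ℝ)^((K+1) * A.ncard)
          ≤ Real.exp (4 * aR * q * Real.log n) := by
        have hx : (0:ℝ) < ((n*2+1 : ℕ):ℝ) := by positivity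
        have hexp : (((n*2+1):ℕ):ℝ)^((K+1) * A.ncard)
            = Real.exp ((((K+1) * A.ncard : ℕ):ℝ) * Real.log ((n*2+1:ℕ):ℝ)) := by
          rw [Real.exp_nat_mul, Real.exp_log hx]
        rw [hexp, Real.exp_le_exp]
        have hlogpos : (0:ℝ) ≤ Real.log ((n*2+1:ℕ):ℝ) := by
          refine Real.log_nonneg ?_
          push_cast
          linarith
        have e1 : ((K:ℝ)+1) * Real.log ((n*2+1:ℕ):ℝ) ≤ (6*q) * ((4/3) * Real.log n) :=
          mul_le_mul hKle hlog2n hlogpos (by positivity)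
        have e2 : (((K+1) * A.ncard : ℕ):ℝ) = ((K:ℝ)+1) * (A.ncard:ℝ) := by push_cast; ring
        rw [e2]
        calc ((K:ℝ)+1) * (A.ncard:ℝ) * Real.log ((n*2+1:ℕ):ℝ)
            = (((K:ℝ)+1) * Real.log ((n*2+1:ℕ):ℝ)) * (A.ncard:ℝ) := by ring
          _ ≤ ((6*q) * ((4/3) * Real.log n)) * (A.ncard:ℝ) := by
              refine mul_le_mul_of_nonneg_right e1 (by positivity)
          _ = 4 * (2 * (A.ncard:ℝ)) * q * Real.log n := by ring
          _ = 4 * aR * q * Real.log n := by rw [hAcard]; ring_nf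
      calc ((Cof '' 𝒢).ncard : ℝ) ≤ ((((n*2+1):ℕ):ℝ))^((K+1) * A.ncard) := by
            exact_mod_cast le_trans hchainN hc2
        _ ≤ Real.exp (4 * aR * q * Real.log n) := hfinal
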